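/- Let m be a natural number, let x, y : Fin (2^m) → ℝ, and let H denote the unnormalized Walsh–Hadamard transform. Then H((Hx) ∘ (Hy)) = 2^m • (x *_⊕ y), where ∘ denotes the pointwise (Hadamard) product of vectors and x *_⊕ y is the XOR-convolution. In particular, the XOR-convolution used in the FWHT variant of compressed matrix multiplication is computed by transforming, multiplying pointwise, and transforming again. -/

import Mathlib

/-- The number of 1-bits in the binary representation of a natural number. -/
def popCount (n : ℕ) : ℕ := (Nat.bits n).count true

/-- Bitwise XOR on `Fin (2^m)`. -/
def fxor {m : ℕ} (i j : Fin (2^m)) : Fin (2^m) :=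
  ⟨i.val ^^^ j.val, Nat.xor_lt_two_pow i.isLt j.isLt⟩

/-- The unnormalized Walsh–Hadamard transform:
`(Hx)[k] = Σ_j (-1)^(popCount (k AND j)) x[j]`. -/
def wht {m : ℕ} (x : Fin (2^m) → ℝ) : Fin (2^m) → ℝ :=
  fun k => ∑ j, (-1 : ℝ) ^ popCount (k.val &&& j.val) * x j

/-- The XOR-convolution: `(x *⊕ y)[k] = Σ_{i ⊕ j = k} x[i]·y[j]`. -/
def xorConv {m : ℕ} (x y : Fin (2^m) → ℝ) : Fin (2^m) → ℝ :=
  fun k => ∑ p ∈ Finset.univ.filter (fun p : Fin (2^m) × Fin (2^m) => fxor p.1 p.2 = k),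
    x p.1 * y p.2

open Finset in
lemma popCount_eq_sum {N n : ℕ} (h : n < 2^N) :
    popCount n = ∑ i ∈ range N, (n.testBit i).toNat := by
  induction N generalizing n with
  | zero => interval_cases n; simp [popCount]
  | succ N ih =>
    rcases Nat.eq_zero_or_pos n with h0 | h0
    · subst h0; simp [popCount]
    have hq : n / 2 < 2^N := by
      rw [pow_succ] at h; omega
    have key : popCount n = popCount (n / 2) + n % 2 := by
      rcases Nat.even_or_odd n with he | ho
      · obtain ⟨c, hc⟩ := he
        have hc' : n = 2 * c := by omega
        have hcne : c ≠ 0 := by omega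
        subst hc'
        rw [show (2*c)/2 = c by omega, popCount, popCount, Nat.bit0_bits c hcne]
        simp
      · obtain ⟨c, hc⟩ := ho
        subst hc
        rw [show (2*c+1)/2 = c by omega, popCount, popCount, Nat.bit1_bits]
        simp
    rw [key, ih hq, Finset.sum_range_succ']
    congr 1
    · exact Finset.sum_congr rfl fun i _ => by rw [Nat.testBit_succ]
    · rw [Nat.testBit_zero]
      rcases Nat.mod_two_eq_zero_or_one n with h2 | h2 <;> simp [h2]

open Finset in
lemma neg_one_pow_popCount {N n : ℕ} (h : n < 2^N) :
    (-1:ℝ)^popCount n = ∏ i ∈ range N, (-1:ℝ)^(n.testBit i).toNat := by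
  rw [popCount_eq_sum h, ← Finset.prod_pow_eq_pow_sum]

lemma sign_xor {N a b : ℕ} (ha : a < 2^N) (hb : b < 2^N) :
    (-1:ℝ)^popCount (a ^^^ b) = (-1:ℝ)^popCount a * (-1:ℝ)^popCount b := by
  have hx : a ^^^ b < 2^N := Nat.xor_lt_two_pow ha hb
  rw [neg_one_pow_popCount hx, neg_one_pow_popCount ha, neg_one_pow_popCount hb,
    ← Finset.prod_mul_distrib]
  refine Finset.prod_congr rfl fun i _ => ?_
  rw [Nat.testBit_xor]
  cases a.testBit i <;> cases b.testBit i <;> simp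

open Finset in
lemma popCount_two_pow (i : ℕ) : popCount (2^i) = 1 := by
  rw [popCount_eq_sum (Nat.pow_lt_pow_right one_lt_two i.lt_succ_self)]
  have : ∀ j ∈ range (i+1), ((2^i : ℕ).testBit j).toNat = if j = i then 1 else 0 := by
    intro j _
    rw [Nat.testBit_two_pow]
    by_cases h : j = i <;> simp [h] <;> omega
  rw [Finset.sum_congr rfl this, Finset.sum_ite_eq' (range (i+1)) i (fun _ => 1)]
  simp

open Finset in
lemma sum_char {m : ℕ} (t : Fin (2^m)) :
    ∑ k : Fin (2^m), (-1:ℝ)^popCount (k.val &&& t.val) = if t = 0 then ((2:ℝ)^m) else 0 := by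
  by_cases ht : t = 0
  · subst ht
    simp [popCount, show ((0 : Fin (2^m)) : ℕ) = 0 from rfl]
  · rw [if_neg ht]
    have htv : t.val ≠ 0 := fun h => ht (Fin.ext (by simp [h]))
    obtain ⟨i, hi, -⟩ := Nat.exists_most_significant_bit htv
    have him : i < m := by
      by_contra hc
      have : t.val < 2^i := lt_of_lt_of_le t.isLt (Nat.pow_le_pow_right two_pos (not_lt.mp hc))
      rw [Nat.testBit_lt_two_pow this] at hi
      exact Bool.false_ne_true hi
    set e : Fin (2^m) := ⟨2^i, Nat.pow_lt_pow_right one_lt_two him⟩ with he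
    have hinv : Function.Involutive (fun k : Fin (2^m) => fxor k e) := by
      intro k
      apply Fin.ext
      simp [fxor, Nat.xor_assoc]
    have hand : (2^i) &&& t.val = 2^i := by
      apply Nat.eq_of_testBit_eq
      intro j
      rw [Nat.testBit_and, Nat.testBit_two_pow]
      by_cases h : i = j
      · subst h; simp [hi]
      · simp [h]
    have hflip : ∀ k : Fin (2^m), (-1:ℝ)^popCount ((fxor k e).val &&& t.val)
        = -((-1:ℝ)^popCount (k.val &&& t.val)) := by
      intro k
      have : (fxor k e).val &&& t.val = (k.val &&& t.val) ^^^ 2^i := by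
        show (k.val ^^^ 2^i) &&& t.val = _
        rw [Nat.and_xor_distrib_right, hand]
      rw [this, sign_xor (Nat.and_lt_two_pow _ t.isLt) (Nat.pow_lt_pow_right one_lt_two him),
        popCount_two_pow]
      ring
    have hsum : ∑ k : Fin (2^m), (-1:ℝ)^popCount ((fxor k e).val &&& t.val)
        = ∑ k : Fin (2^m), (-1:ℝ)^popCount (k.val &&& t.val) :=
      Equiv.sum_comp hinv.toPerm (fun k => (-1:ℝ)^popCount (k.val &&& t.val))
    rw [Finset.sum_congr rfl (fun k _ => hflip k), Finset.sum_neg_distrib] at hsum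
    linarith


/-- Transforming, multiplying pointwise (Hadamard product), and transforming
again yields `2^m` times the XOR-convolution: `H((Hx) ∘ (Hy)) = 2^m • (x *⊕ y)`. -/
theorem wht_wht_mul_wht (m : ℕ) (x y : Fin (2^m) → ℝ) :
    wht (wht x * wht y) = (2^m : ℕ) • xorConv x y := by
  funext k
  show ∑ j : Fin (2^m), (-1:ℝ)^popCount (k.val &&& j.val) *
      ((∑ a : Fin (2^m), (-1:ℝ)^popCount (j.val &&& a.val) * x a) *
       (∑ b : Fin (2^m), (-1:ℝ)^popCount (j.val &&& b.val) * y b)) = _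
  have step1 : ∀ j : Fin (2^m), (-1:ℝ)^popCount (k.val &&& j.val) *
      ((∑ a : Fin (2^m), (-1:ℝ)^popCount (j.val &&& a.val) * x a) *
       (∑ b : Fin (2^m), (-1:ℝ)^popCount (j.val &&& b.val) * y b))
      = ∑ a : Fin (2^m), ∑ b : Fin (2^m),
        (-1:ℝ)^popCount (j.val &&& (fxor k (fxor a b)).val) * (x a * y b) := by
    intro j
    rw [Finset.sum_mul_sum, Finset.mul_sum]
    refine Finset.sum_congr rfl fun a _ => ?_
    rw [Finset.mul_sum]
    refine Finset.sum_congr rfl fun b _ => ?_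
    have hchar : (-1:ℝ)^popCount (j.val &&& (fxor k (fxor a b)).val)
        = (-1:ℝ)^popCount (k.val &&& j.val) * ((-1:ℝ)^popCount (j.val &&& a.val) *
          (-1:ℝ)^popCount (j.val &&& b.val)) := by
      show (-1:ℝ)^popCount (j.val &&& (k.val ^^^ (a.val ^^^ b.val))) = _
      rw [Nat.and_xor_distrib_left, Nat.and_xor_distrib_left,
        sign_xor (Nat.and_lt_two_pow _ k.isLt)
          (Nat.xor_lt_two_pow (Nat.and_lt_two_pow _ a.isLt) (Nat.and_lt_two_pow _ b.isLt)),
        sign_xor (Nat.and_lt_two_pow _ a.isLt) (Nat.and_lt_two_pow _ b.isLt),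
        Nat.and_comm j.val k.val]
    rw [hchar]; ring
  rw [Finset.sum_congr rfl fun j _ => step1 j]
  rw [Finset.sum_comm]
  have step2 : ∀ a : Fin (2^m), ∑ j : Fin (2^m), ∑ b : Fin (2^m),
      (-1:ℝ)^popCount (j.val &&& (fxor k (fxor a b)).val) * (x a * y b)
      = ∑ b : Fin (2^m), (if fxor a b = k then ((2:ℝ)^m) else 0) * (x a * y b) := by
    intro a
    rw [Finset.sum_comm]
    refine Finset.sum_congr rfl fun b _ => ?_
    rw [← Finset.sum_mul, sum_char]
    congr 1
    have : fxor k (fxor a b) = 0 ↔ fxor a b = k := by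
      constructor
      · intro h
        have := congrArg Fin.val h
        simp only [fxor] at this ⊢
        apply Fin.ext
        have h0 : k.val ^^^ (a.val ^^^ b.val) = 0 := this
        have := xor_eq_zero_iff.mp h0
        simp [← this]
      · intro h
        rw [← h]
        apply Fin.ext
        simp [fxor, Nat.xor_self]
    simp [this]
  rw [Finset.sum_congr rfl fun a _ => step2 a]
  have : ∀ a b : Fin (2^m), (if fxor a b = k then ((2:ℝ)^m) else 0) * (x a * y b)
      = (2^m : ℝ) * (if fxor a b = k then x a * y b else 0) := by
    intro a b; by_cases h : fxor a b = k <;> simp [h]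
  simp_rw [this]
  simp_rw [← Finset.mul_sum]
  show _ = (2^m : ℕ) • xorConv x y k
  rw [xorConv, Finset.sum_filter, nsmul_eq_mul, Fintype.sum_prod_type]
  push_cast
  ring_nf
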